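/- arXiv:1702.01855 — 14 statements merged into one kernel-verified Lean document; each statement's English description precedes it below -/
import Mathlib

section
/- (Catalan-type identity) For all integers n ≥ m ≥ 0, (R_n)² − (−g)^{n−m}·(R_m)² = R_{n+m}·R_{n−m}. -/
theorem stmt_1 (K : Type*) [Field K] (a b α : K) (hab : a ≠ b) (hα : α ≠ 0)
    (d g : K) (hd : d = a + b) (hg : g = -(a * b))
    (R L : ℕ → K)
    (hR : ∀ n : ℕ, R n = (a ^ n - b ^ n) / (a - b))
    (hL : ∀ n : ℕ, L n = (a ^ n + b ^ n) / α)
    (m n : ℕ) (hmn : m ≤ n) :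
    (R n) ^ 2 - (-g) ^ (n - m) * (R m) ^ 2 = R (n + m) * R (n - m) := by
  obtain ⟨k, rfl⟩ := Nat.exists_eq_add_of_le hmn
  have hab' : a - b ≠ 0 := sub_ne_zero.mpr hab
  simp only [hR, hg, neg_neg, Nat.add_sub_cancel_left, pow_add, mul_pow]
  field_simp
  ring
end

section
/- For all integers n ≥ m ≥ 0, R_{n+m} = α·R_n·L_m − (−g)^m·R_{n−m}. -/
theorem stmt_3 (K : Type*) [Field K] (a b α : K) (hab : a ≠ b) (hα : α ≠ 0)
    (d g : K) (hd : d = a + b) (hg : g = -(a * b))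
    (R L : ℕ → K)
    (hR : ∀ n : ℕ, R n = (a ^ n - b ^ n) / (a - b))
    (hL : ∀ n : ℕ, L n = (a ^ n + b ^ n) / α)
    (m n : ℕ) (hmn : m ≤ n) :
    R (n + m) = α * R n * L m - (-g) ^ m * R (n - m) := by
  obtain ⟨k, rfl⟩ := Nat.exists_eq_add_of_le hmn
  simp only [hR, hL, hg, neg_neg]
  rw [Nat.add_sub_cancel_left]
  have h : a - b ≠ 0 := sub_ne_zero.mpr hab
  field_simp
  ring
end

section
/- For all integers m, n ≥ 0, (a − b)²·R_{m+n+1} = α²·L_{m+1}·L_{n+1} + α²·g·L_m·L_n. -/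
theorem stmt_4 (K : Type*) [Field K] (a b α : K) (hab : a ≠ b) (hα : α ≠ 0)
    (d g : K) (hd : d = a + b) (hg : g = -(a * b))
    (R L : ℕ → K)
    (hR : ∀ n : ℕ, R n = (a ^ n - b ^ n) / (a - b))
    (hL : ∀ n : ℕ, L n = (a ^ n + b ^ n) / α)
    (m n : ℕ) :
    (a - b) ^ 2 * R (m + n + 1) = α ^ 2 * L (m + 1) * L (n + 1) + α ^ 2 * g * L m * L n := by
  have h : a - b ≠ 0 := sub_ne_zero.mpr hab
  simp only [hR, hL, hg]
  field_simp
  ring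
end

section
/- For every integer n ≥ 1, (a − b)²·R_n = α·(L_{n+1} + g·L_{n−1}). -/
theorem stmt_5 (K : Type*) [Field K] (a b α : K) (hab : a ≠ b) (hα : α ≠ 0)
    (d g : K) (hd : d = a + b) (hg : g = -(a * b))
    (R L : ℕ → K)
    (hR : ∀ n : ℕ, R n = (a ^ n - b ^ n) / (a - b))
    (hL : ∀ n : ℕ, L n = (a ^ n + b ^ n) / α)
    (n : ℕ) (hn : 1 ≤ n) :
    (a - b) ^ 2 * R n = α * (L (n + 1) + g * L (n - 1)) := by
  obtain ⟨m, rfl⟩ := Nat.exists_eq_add_of_le hn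
  simp only [hR, hL, hg, Nat.add_sub_cancel_left]
  have hab' : a - b ≠ 0 := sub_ne_zero.mpr hab
  field_simp
  ring
end

section
/- For all integers n ≥ m ≥ 0, α·(L_m·R_n − L_n·R_m) = 2·(−g)^m·R_{n−m}. -/
theorem stmt_8 (K : Type*) [Field K] (a b α : K) (hab : a ≠ b) (hα : α ≠ 0)
    (d g : K) (hd : d = a + b) (hg : g = -(a * b))
    (R L : ℕ → K)
    (hR : ∀ n : ℕ, R n = (a ^ n - b ^ n) / (a - b))
    (hL : ∀ n : ℕ, L n = (a ^ n + b ^ n) / α)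
    (m n : ℕ) (hmn : m ≤ n) :
    α * (L m * R n - L n * R m) = 2 * (-g) ^ m * R (n - m) := by
  obtain ⟨k, rfl⟩ := Nat.exists_eq_add_of_le hmn
  have hab' : a - b ≠ 0 := sub_ne_zero.mpr hab
  simp only [hR, hL, hg, neg_neg, Nat.add_sub_cancel_left, pow_add, mul_pow]
  field_simp
  ring
end

section
/- For every integer n ≥ 0, α²·(g·(L_n)² + (L_{n+1})²) = (a − b)²·(g·(R_n)² + (R_{n+1})²), and both quantities equal (a − b)²·R_{2n+1}. -/
theorem stmt_9 (K : Type*) [Field K] (a b α : K) (hab : a ≠ b) (hα : α ≠ 0)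
    (d g : K) (hd : d = a + b) (hg : g = -(a * b))
    (R L : ℕ → K)
    (hR : ∀ n : ℕ, R n = (a ^ n - b ^ n) / (a - b))
    (hL : ∀ n : ℕ, L n = (a ^ n + b ^ n) / α)
    (n : ℕ) :
    α ^ 2 * (g * (L n) ^ 2 + (L (n + 1)) ^ 2) = (a - b) ^ 2 * (g * (R n) ^ 2 + (R (n + 1)) ^ 2) ∧
      (a - b) ^ 2 * (g * (R n) ^ 2 + (R (n + 1)) ^ 2) = (a - b) ^ 2 * R (2 * n + 1) := by
  have hab' : a - b ≠ 0 := sub_ne_zero.mpr hab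
  constructor <;>
  · simp only [hR, hL, hg]
    field_simp
    ring
end

section
/- For every integer n ≥ 0, α·R_{n+1}·L_n = R_{2n+1} + (−g)ⁿ. -/
theorem stmt_10 (K : Type*) [Field K] (a b α : K) (hab : a ≠ b) (hα : α ≠ 0)
    (d g : K) (hd : d = a + b) (hg : g = -(a * b))
    (R L : ℕ → K)
    (hR : ∀ n : ℕ, R n = (a ^ n - b ^ n) / (a - b))
    (hL : ∀ n : ℕ, L n = (a ^ n + b ^ n) / α)
    (n : ℕ) :
    α * R (n + 1) * L n = R (2 * n + 1) + (-g) ^ n := by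
  have h : a - b ≠ 0 := sub_ne_zero.mpr hab
  simp only [hR, hL, hg, neg_neg]
  field_simp
  ring
end

section
/- For all integers m, n ≥ 0, 2·α·L_{m+n} = α²·L_m·L_n + (a − b)²·R_m·R_n. -/
theorem stmt_11 (K : Type*) [Field K] (a b α : K) (hab : a ≠ b) (hα : α ≠ 0)
    (d g : K) (hd : d = a + b) (hg : g = -(a * b))
    (R L : ℕ → K)
    (hR : ∀ n : ℕ, R n = (a ^ n - b ^ n) / (a - b))
    (hL : ∀ n : ℕ, L n = (a ^ n + b ^ n) / α)
    (m n : ℕ) :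
    2 * α * L (m + n) = α ^ 2 * L m * L n + (a - b) ^ 2 * R m * R n := by
  have h : a - b ≠ 0 := sub_ne_zero.mpr hab
  rw [hL, hL, hL, hR, hR, pow_add]
  field_simp
  ring
end

section
/- For all integers m ≥ n ≥ 0, α·(L_{m+n} − (−g)ⁿ·L_{m−n}) = (a − b)²·R_m·R_n. -/
theorem stmt_12 (K : Type*) [Field K] (a b α : K) (hab : a ≠ b) (hα : α ≠ 0)
    (d g : K) (hd : d = a + b) (hg : g = -(a * b))
    (R L : ℕ → K)
    (hR : ∀ n : ℕ, R n = (a ^ n - b ^ n) / (a - b))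
    (hL : ∀ n : ℕ, L n = (a ^ n + b ^ n) / α)
    (m n : ℕ) (hnm : n ≤ m) :
    α * (L (m + n) - (-g) ^ n * L (m - n)) = (a - b) ^ 2 * R m * R n := by
  obtain ⟨k, rfl⟩ := Nat.exists_eq_add_of_le hnm
  have hab' : a - b ≠ 0 := sub_ne_zero.mpr hab
  simp only [hR, hL, hg, neg_neg, Nat.add_sub_cancel_left]
  field_simp
  ring
end

section
/- For every integer n ≥ 1, α²·L_{n−1}·L_{n+1} − (a − b)²·(R_n)² = (−g)^{n−1}·(α·L_2 − 2g). -/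
theorem stmt_13 (K : Type*) [Field K] (a b α : K) (hab : a ≠ b) (hα : α ≠ 0)
    (d g : K) (hd : d = a + b) (hg : g = -(a * b))
    (R L : ℕ → K)
    (hR : ∀ n : ℕ, R n = (a ^ n - b ^ n) / (a - b))
    (hL : ∀ n : ℕ, L n = (a ^ n + b ^ n) / α)
    (n : ℕ) (hn : 1 ≤ n) :
    α ^ 2 * L (n - 1) * L (n + 1) - (a - b) ^ 2 * (R n) ^ 2 =
      (-g) ^ (n - 1) * (α * L 2 - 2 * g) := by
  obtain ⟨m, rfl⟩ := Nat.exists_eq_add_of_le hn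
  have hab' : a - b ≠ 0 := sub_ne_zero.mpr hab
  simp only [hR, hL, hg, neg_neg, Nat.add_sub_cancel_left]
  field_simp
  ring
end

section
/- For every integer n ≥ 0, L_{5n} = L_n·((α·L_{2n} − (−g)ⁿ)² + (a − b)²·(−g)ⁿ·(R_n)²). -/
theorem stmt_14 (K : Type*) [Field K] (a b α : K) (hab : a ≠ b) (hα : α ≠ 0)
    (d g : K) (hd : d = a + b) (hg : g = -(a * b))
    (R L : ℕ → K)
    (hR : ∀ n : ℕ, R n = (a ^ n - b ^ n) / (a - b))
    (hL : ∀ n : ℕ, L n = (a ^ n + b ^ n) / α)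
    (n : ℕ) :
    L (5 * n) = L n * ((α * L (2 * n) - (-g) ^ n) ^ 2 + (a - b) ^ 2 * (-g) ^ n * (R n) ^ 2) := by
  have hab' : a - b ≠ 0 := sub_ne_zero.mpr hab
  simp only [hR, hL, hg, neg_neg, pow_mul, mul_pow]
  field_simp
  ring
end

section
/- For all integers n, m, i ≥ 0, R_{n+i}·R_{n+m} − R_n·R_{n+m+i} = (−g)ⁿ·R_i·R_m. -/
theorem stmt_15 (K : Type*) [Field K] (a b α : K) (hab : a ≠ b) (hα : α ≠ 0)
    (d g : K) (hd : d = a + b) (hg : g = -(a * b))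
    (R L : ℕ → K)
    (hR : ∀ n : ℕ, R n = (a ^ n - b ^ n) / (a - b))
    (hL : ∀ n : ℕ, L n = (a ^ n + b ^ n) / α)
    (n m i : ℕ) :
    R (n + i) * R (n + m) - R n * R (n + m + i) = (-g) ^ n * R i * R m := by
  have hab' : a - b ≠ 0 := sub_ne_zero.mpr hab
  simp only [hR, hg, neg_neg, pow_add, mul_pow]
  field_simp
  ring
end

section
/- For all integers m, n, s, t, r ≥ 0 with r ≤ min(m, n, s, t) and m + n = s + t, one has R_m·R_n − R_s·R_t = (−g)ʳ·(R_{m−r}·R_{n−r} − R_{s−r}·R_{t−r}). -/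
theorem stmt_16 (K : Type*) [Field K] (a b α : K) (hab : a ≠ b) (hα : α ≠ 0)
    (d g : K) (hd : d = a + b) (hg : g = -(a * b))
    (R L : ℕ → K)
    (hR : ∀ n : ℕ, R n = (a ^ n - b ^ n) / (a - b))
    (hL : ∀ n : ℕ, L n = (a ^ n + b ^ n) / α)
    (m n s t r : ℕ) (hm : r ≤ m) (hn : r ≤ n) (hs : r ≤ s) (ht : r ≤ t)
    (hsum : m + n = s + t) :
    R m * R n - R s * R t = (-g) ^ r * (R (m - r) * R (n - r) - R (s - r) * R (t - r)) := by
  have hab' : a - b ≠ 0 := sub_ne_zero.mpr hab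
  obtain ⟨m', rfl⟩ : ∃ m', m = m' + r := ⟨m - r, by omega⟩
  obtain ⟨n', rfl⟩ : ∃ n', n = n' + r := ⟨n - r, by omega⟩
  obtain ⟨s', rfl⟩ : ∃ s', s = s' + r := ⟨s - r, by omega⟩
  obtain ⟨t', rfl⟩ : ∃ t', t = t' + r := ⟨t - r, by omega⟩
  simp only [hR, Nat.add_sub_cancel, hg, neg_neg]
  have hA : a ^ m' * a ^ n' = a ^ s' * a ^ t' := by
    rw [← pow_add, ← pow_add]; congr 1; omega
  have hB : b ^ m' * b ^ n' = b ^ s' * b ^ t' := by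
    rw [← pow_add, ← pow_add]; congr 1; omega
  simp only [pow_add] at *
  field_simp
  ring_nf
  linear_combination ((a^r)^2 - a^r*b^r)*hA + ((b^r)^2 - a^r*b^r)*hB
end

section
/- For every integer n ≥ 0, R_{3n} = (a − b)²·(R_n)³ + 3·(−g)ⁿ·R_n. -/
theorem stmt_17 (K : Type*) [Field K] (a b α : K) (hab : a ≠ b) (hα : α ≠ 0)
    (d g : K) (hd : d = a + b) (hg : g = -(a * b))
    (R L : ℕ → K)
    (hR : ∀ n : ℕ, R n = (a ^ n - b ^ n) / (a - b))
    (hL : ∀ n : ℕ, L n = (a ^ n + b ^ n) / α)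
    (n : ℕ) :
    R (3 * n) = (a - b) ^ 2 * (R n) ^ 3 + 3 * (-g) ^ n * R n := by
  have h : a - b ≠ 0 := sub_ne_zero.mpr hab
  simp only [hR, hg, neg_neg, mul_pow, pow_mul]
  field_simp
  ring
end
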